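/- Let N ≥ 2 and let (T_A), A ∈ Fin(N²−1), be an orthonormal basis of the real vector space of N×N complex Hermitian traceless matrices with inner product ⟨X,Y⟩ = Tr(XY). Then for every k ≥ 1 and every map A : Fin k → Fin(N²−1), the color factor satisfies |Tr(T_{A(0)} T_{A(1)} ⋯ T_{A(k−1)})| ≤ √2. -/

import Mathlib

open Matrix

attribute [local instance] Matrix.frobeniusNormedAddCommGroup Matrix.frobeniusNormedRing

lemma frob_sq_eq {n : ℕ} (X : Matrix (Fin n) (Fin n) ℂ) :
    ‖X‖ ^ 2 = ∑ i, ∑ j, ‖X i j‖ ^ 2 := by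
  rw [Matrix.frobenius_norm_def]
  rw [← Real.rpow_natCast _ 2, ← Real.rpow_mul (by positivity)]
  norm_num

lemma trace_prod_eq {n : ℕ} (X Y : Matrix (Fin n) (Fin n) ℂ) :
    Matrix.trace (X * Y) = ∑ p : Fin n × Fin n, X p.1 p.2 * Y p.2 p.1 := by
  rw [Matrix.trace]
  simp_rw [Matrix.diag_apply, Matrix.mul_apply]
  rw [Fintype.sum_prod_type]

/-- Cauchy–Schwarz for the trace of a product. -/
lemma trace_mul_le {n : ℕ} (X Y : Matrix (Fin n) (Fin n) ℂ) :
    ‖Matrix.trace (X * Y)‖ ≤ ‖X‖ * ‖Y‖ := by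
  rw [trace_prod_eq]
  have h1 : ‖∑ p : Fin n × Fin n, X p.1 p.2 * Y p.2 p.1‖ ≤
      ∑ p : Fin n × Fin n, ‖X p.1 p.2‖ * ‖Y p.2 p.1‖ := by
    refine (norm_sum_le _ _).trans ?_
    apply Finset.sum_le_sum
    intro p _
    rw [norm_mul]
  refine h1.trans ?_
  have h2 := Finset.sum_mul_sq_le_sq_mul_sq Finset.univ
    (fun p : Fin n × Fin n => ‖X p.1 p.2‖)
    (fun p : Fin n × Fin n => ‖Y p.2 p.1‖)
  have h3 : (0:ℝ) ≤ ∑ p : Fin n × Fin n, ‖X p.1 p.2‖ * ‖Y p.2 p.1‖ := by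
    positivity
  have hX : ∑ p : Fin n × Fin n, ‖X p.1 p.2‖ ^ 2 = ‖X‖ ^ 2 := by
    rw [frob_sq_eq, Fintype.sum_prod_type]
  have hY : ∑ p : Fin n × Fin n, ‖Y p.2 p.1‖ ^ 2 = ‖Y‖ ^ 2 := by
    rw [frob_sq_eq, Fintype.sum_prod_type, Finset.sum_comm]
  calc ∑ p : Fin n × Fin n, ‖X p.1 p.2‖ * ‖Y p.2 p.1‖
      = Real.sqrt ((∑ p : Fin n × Fin n, ‖X p.1 p.2‖ * ‖Y p.2 p.1‖) ^ 2) :=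
        (Real.sqrt_sq h3).symm
    _ ≤ Real.sqrt ((‖X‖ * ‖Y‖) ^ 2) := by
        apply Real.sqrt_le_sqrt
        rw [mul_pow, ← hX, ← hY]
        exact h2
    _ = ‖X‖ * ‖Y‖ := Real.sqrt_sq (by positivity)

lemma frob_norm_one {n : ℕ} (X : Matrix (Fin n) (Fin n) ℂ) (hX : X.IsHermitian)
    (h1 : Matrix.trace (X * X) = 1) : ‖X‖ = 1 := by
  have hsq : ‖X‖ ^ 2 = 1 := by
    rw [frob_sq_eq]
    have : Matrix.trace (X * X) = ((∑ i, ∑ j, ‖X i j‖ ^ 2 : ℝ) : ℂ) := by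
      rw [trace_prod_eq, Fintype.sum_prod_type]
      push_cast
      congr 1; ext i; congr 1; ext j
      have hc : starRingEnd ℂ (X i j) = X j i := by
        have := congrFun (congrFun hX.symm j) i
        simpa [Matrix.conjTranspose_apply] using this.symm
      rw [← hc, Complex.mul_conj]
      norm_cast
      rw [Complex.sq_norm]
    rw [this] at h1
    exact_mod_cast h1
  nlinarith [norm_nonneg X]

theorem stmt_6 (N : ℕ) (hN : 2 ≤ N)
    (T : Fin (N ^ 2 - 1) → Matrix (Fin N) (Fin N) ℂ)
    (hherm : ∀ A, (T A).IsHermitian)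
    (htraceless : ∀ A, Matrix.trace (T A) = 0)
    (honb : ∀ A B, Matrix.trace (T A * T B) = if A = B then 1 else 0)
    (hspan : ∀ X : Matrix (Fin N) (Fin N) ℂ, X.IsHermitian → Matrix.trace X = 0 →
      ∃ c : Fin (N ^ 2 - 1) → ℝ, X = ∑ A, c A • T A) :
    ∀ (k : ℕ), 1 ≤ k → ∀ A : Fin k → Fin (N ^ 2 - 1),
      ‖Matrix.trace (List.ofFn fun t : Fin k => T (A t)).prod‖ ≤
        Real.sqrt 2 := by
  have hT1 : ∀ B, ‖T B‖ = 1 := fun B => frob_norm_one _ (hherm B) (by simpa using honb B B)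
  have hsqrt2 : (1:ℝ) ≤ Real.sqrt 2 := by
    nlinarith [Real.sq_sqrt (by norm_num : (2:ℝ) ≥ 0), Real.sqrt_nonneg 2]
  intro k hk A
  match k, hk with
  | 1, _ =>
    rw [List.ofFn_succ, List.ofFn_zero, List.prod_cons, List.prod_nil, mul_one]
    simp [htraceless, Real.sqrt_nonneg]
  | (n+2), _ =>
    rw [List.ofFn_succ, List.prod_cons]
    refine (trace_mul_le _ _).trans ?_
    rw [hT1, one_mul]
    refine le_trans ?_ hsqrt2
    have hne : (List.ofFn fun t : Fin (n+1) => T (A (Fin.succ t))) ≠ [] := by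
      simp [List.ofFn_eq_nil_iff]
    refine (List.norm_prod_le' hne).trans ?_
    have : ∀ x ∈ (List.ofFn fun t : Fin (n+1) => T (A (Fin.succ t))).map norm, x = 1 := by
      intro x hx
      simp only [List.mem_map, List.mem_ofFn] at hx
      obtain ⟨y, ⟨t, rfl⟩, rfl⟩ := hx
      exact hT1 _
    rw [List.prod_eq_one this]
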